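/- Let A ∈ ℤ^{d×n} be of rank d and b = 𝟏 (the all-ones vector). There exists α ∈ {1, −1} such that Δ_{A,𝟏}(ω) = α · Δ_{A,𝟏}(−ω) for all ω ∈ ℂ^d. Consequently, every monomial appearing in Δ_{A,𝟏} has even total degree if α = 1, and odd total degree if α = −1. -/

import Mathlib

noncomputable section


/-- A subset of `ℂⁿ` is Zariski closed if it is the common zero locus
of a set of polynomials. -/
def ZClosed {n : ℕ} (S : Set (Fin n → ℂ)) : Prop :=
  ∃ I : Set (MvPolynomial (Fin n) ℂ),
    S = {x | ∀ p ∈ I, MvPolynomial.eval x p = 0}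

/-- Irreducibility with respect to the Zariski topology on `ℂⁿ`. -/
def ZIrred {n : ℕ} (S : Set (Fin n → ℂ)) : Prop :=
  S.Nonempty ∧ ∀ F G : Set (Fin n → ℂ), ZClosed F → ZClosed G →
    S ⊆ F ∪ G → (S ⊆ F ∨ S ⊆ G)

/-- Dimension of a subset of `ℂⁿ`: Krull dimension of the poset of irreducible
Zariski closed subsets contained in it. -/
def ZDim {n : ℕ} (S : Set (Fin n → ℂ)) : WithBot ℕ∞ :=
  Order.krullDim {T : Set (Fin n → ℂ) // ZClosed T ∧ ZIrred T ∧ T ⊆ S}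

/-- Zariski closure in `ℂⁿ`. -/
def ZClosure {n : ℕ} (S : Set (Fin n → ℂ)) : Set (Fin n → ℂ) :=
  ⋂₀ {F | ZClosed F ∧ S ⊆ F}

/-- A property `P` of points of `ℂ^σ` holds generically if it holds on the
nonvanishing locus of some nonzero polynomial. -/
def GenericProp {σ : Type} (P : (σ → ℂ) → Prop) : Prop :=
  ∃ p : MvPolynomial σ ℂ, p ≠ 0 ∧ ∀ x : σ → ℂ, MvPolynomial.eval x p ≠ 0 → P x

/-- `S ⊆ ℂⁿ` (of dimension `d`) has degree `k`: a generic affine-linear subspace of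
codimension `d` meets `S` in exactly `k` points. -/
def HasVarietyDegree {n : ℕ} (S : Set (Fin n → ℂ)) (d k : ℕ) : Prop :=
  GenericProp (σ := Fin d × Option (Fin n)) fun c =>
    ({x ∈ S | ∀ j : Fin d, c (j, none) + ∑ i : Fin n, c (j, some i) * x i = 0}).ncard = k

/-- The parametrization `ψ_{A,β}` with scaling vector `β`. -/
def psiBeta {d n : ℕ} (A : Matrix (Fin d) (Fin n) ℤ) (β : Fin n → ℂ) (v : Fin d → ℂ) :
    Fin n → ℂ :=
  fun ℓ => (β ℓ * ∏ k, v k ^ (A k ℓ) + (β ℓ)⁻¹ * ∏ k, v k ^ (-(A k ℓ))) / 2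

/-- The toric Jacobi matrix `J_{A,b}(v) = ½ A · diag(β_ℓ v^{a_ℓ} - β_ℓ⁻¹ v^{-a_ℓ}) · Aᵀ`. -/
def toricJac {d n : ℕ} (A : Matrix (Fin d) (Fin n) ℤ) (β : Fin n → ℂ) (v : Fin d → ℂ) :
    Matrix (Fin d) (Fin d) ℂ :=
  fun j k => (1 / 2 : ℂ) * ∑ ℓ, (A j ℓ : ℂ) *
    (β ℓ * ∏ k', v k' ^ (A k' ℓ) - (β ℓ)⁻¹ * ∏ k', v k' ^ (-(A k' ℓ))) * (A k ℓ : ℂ)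

/-- The incidence variety `W_{A,b} = {(v,ω) : A ψ_{A,b}(v) = ω}`. -/
def Wset {d n : ℕ} (A : Matrix (Fin d) (Fin n) ℤ) (β : Fin n → ℂ) :
    Set ((Fin d → ℂ) × (Fin d → ℂ)) :=
  {p | (∀ k, p.1 k ≠ 0) ∧ ∀ i, ∑ ℓ, (A i ℓ : ℂ) * psiBeta A β p.1 ℓ = p.2 i}

/-- The Lissajous discriminant `∇_{A,b}`, the Zariski closure of the branch locus. -/
def discLocus {d n : ℕ} (A : Matrix (Fin d) (Fin n) ℤ) (β : Fin n → ℂ) :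
    Set (Fin d → ℂ) :=
  ZClosure {ω | ∃ v : Fin d → ℂ, (v, ω) ∈ Wset A β ∧ (toricJac A β v).det = 0}

/-- The projection `pr_ω : W → ℂ^d` has degree `e`: generic fibers have `e` points. -/
def HasProjDegree {d : ℕ} (W : Set ((Fin d → ℂ) × (Fin d → ℂ))) (e : ℕ) : Prop :=
  ∃ U : Set (Fin d → ℂ), ZClosed U ∧ U ≠ Set.univ ∧
    ∀ ω ∉ U, ({v | (v, ω) ∈ W}).ncard = e


open MvPolynomial in
/-- Substitution `X i ↦ -X i`. -/
def negMap {d : ℕ} : MvPolynomial (Fin d) ℂ →ₐ[ℂ] MvPolynomial (Fin d) ℂ :=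
  aeval (fun i => -X i)

open MvPolynomial in
lemma eval_negMap {d : ℕ} (p : MvPolynomial (Fin d) ℂ) (x : Fin d → ℂ) :
    eval x (negMap p) = eval (-x) p := by
  induction p using MvPolynomial.induction_on with
  | C a => simp [negMap]
  | add p q hp hq => simp only [negMap, map_add] at hp hq ⊢; rw [hp, hq]
  | mul_X p i hp =>
      simp only [negMap, map_mul, aeval_X, eval_mul, eval_neg, eval_X, Pi.neg_apply] at hp ⊢
      rw [hp]

open MvPolynomial in
lemma negMap_monomial {d : ℕ} (m : Fin d →₀ ℕ) (c : ℂ) :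
    negMap (monomial m c) = (-1 : ℂ) ^ (∑ i, m i) • monomial m c := by
  rw [negMap, aeval_monomial]
  have h1 : (m.prod fun i k => (-X i : MvPolynomial (Fin d) ℂ) ^ k)
      = ((-1 : MvPolynomial (Fin d) ℂ) ^ (∑ i, m i)) * m.prod fun i k => (X i) ^ k := by
    rw [Finsupp.prod_congr (g2 := fun i k => ((-1 : MvPolynomial (Fin d) ℂ) ^ k) * (X i) ^ k)
      (fun i _ => by rw [neg_pow])]
    rw [Finsupp.prod_mul]
    congr 1
    rw [Finsupp.prod_pow, Finset.prod_pow_eq_pow_sum]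
  rw [h1, monomial_eq, smul_eq_C_mul, map_pow, map_neg, map_one, algebraMap_eq]
  ring

open MvPolynomial in
lemma coeff_negMap {d : ℕ} (p : MvPolynomial (Fin d) ℂ) (m : Fin d →₀ ℕ) :
    coeff m (negMap p) = (-1 : ℂ) ^ (∑ i, m i) * coeff m p := by
  conv_lhs => rw [p.as_sum, map_sum]
  rw [Finset.sum_congr rfl (fun m' _ => negMap_monomial m' (coeff m' p))]
  simp only [MvPolynomial.coeff_sum, MvPolynomial.coeff_smul, smul_eq_mul, coeff_monomial]
  rw [Finset.sum_eq_single m (fun b _ hb => by simp [hb])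
    (fun h => by simp [MvPolynomial.notMem_support_iff.mp h])]
  simp

open MvPolynomial in
lemma negMap_negMap {d : ℕ} (p : MvPolynomial (Fin d) ℂ) : negMap (negMap p) = p := by
  ext m
  rw [coeff_negMap, coeff_negMap, ← mul_assoc, ← pow_add, Even.neg_one_pow ⟨_, rfl⟩, one_mul]

open MvPolynomial in
lemma mvpoly_isUnit_eq_C {d : ℕ} (p : MvPolynomial (Fin d) ℂ) (hp : IsUnit p) :
    ∃ c : ℂ, p = C c := by
  induction d with
  | zero => exact ⟨_, p.eq_C_of_isEmpty⟩
  | succ n ih =>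
    have h2 : IsUnit (finSuccEquiv ℂ n p) := hp.map _
    rw [Polynomial.isUnit_iff] at h2
    obtain ⟨r, hr, hrp⟩ := h2
    obtain ⟨c, rfl⟩ := ih r hr
    refine ⟨c, ?_⟩
    have h1 := congrArg (finSuccEquiv ℂ n).symm hrp
    rw [AlgEquiv.symm_apply_apply] at h1
    rw [← h1]
    simpa using RingHom.congr_fun (finSuccEquiv_comp_C_eq_C (R:=ℂ) n) c

lemma ZClosed_neg_preimage {d : ℕ} {F : Set (Fin d → ℂ)} (hF : ZClosed F) :
    ZClosed ((fun x : Fin d → ℂ => -x) ⁻¹' F) := by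
  obtain ⟨I, rfl⟩ := hF
  refine ⟨negMap '' I, ?_⟩
  ext x
  constructor
  · rintro hx q ⟨p, hp, rfl⟩
    rw [eval_negMap]
    exact hx p hp
  · intro hx p hp
    have := hx (negMap p) ⟨p, hp, rfl⟩
    rwa [eval_negMap] at this

lemma branch_symm {d n : ℕ} (A : Matrix (Fin d) (Fin n) ℤ) {ω : Fin d → ℂ}
    (h : ∃ v, (v, ω) ∈ Wset A (fun _ => -Complex.I) ∧ (toricJac A (fun _ => -Complex.I) v).det = 0) :
    ∃ v, (v, -ω) ∈ Wset A (fun _ => -Complex.I) ∧ (toricJac A (fun _ => -Complex.I) v).det = 0 := by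
  obtain ⟨v, ⟨hv, hsum⟩, hdet⟩ := h
  have hβ : ((-Complex.I))⁻¹ = Complex.I := by
    rw [inv_neg, Complex.inv_I, neg_neg]
  have hp1 : ∀ ℓ : Fin n, (∏ k, ((v k)⁻¹) ^ (A k ℓ)) = ∏ k, v k ^ (-(A k ℓ)) :=
    fun ℓ => Finset.prod_congr rfl fun k _ => by rw [inv_zpow, zpow_neg]
  have hp2 : ∀ ℓ : Fin n, (∏ k, ((v k)⁻¹) ^ (-(A k ℓ))) = ∏ k, v k ^ (A k ℓ) :=
    fun ℓ => Finset.prod_congr rfl fun k _ => by rw [zpow_neg, inv_zpow, inv_inv]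
  have hpsi : ∀ ℓ, psiBeta A (fun _ => -Complex.I) (fun k => (v k)⁻¹) ℓ
      = - psiBeta A (fun _ => -Complex.I) v ℓ := by
    intro ℓ
    simp only [psiBeta, hp1 ℓ, hp2 ℓ, hβ]
    ring
  refine ⟨fun k => (v k)⁻¹, ⟨fun k => inv_ne_zero (hv k), fun i => ?_⟩, ?_⟩
  · simp only [hpsi, mul_neg, Finset.sum_neg_distrib, hsum i, Pi.neg_apply]
  · have : toricJac A (fun _ => -Complex.I) (fun k => (v k)⁻¹)
        = toricJac A (fun _ => -Complex.I) v := by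
      funext j k
      simp only [toricJac, hβ]
      congr 1
      refine Finset.sum_congr rfl fun ℓ _ => ?_
      rw [hp1 ℓ, hp2 ℓ]
      ring
    rw [this]; exact hdet

/-- Proposition 6.6: the discriminant `Δ_{A,𝟏}` (a squarefree defining polynomial of
`∇_{A,𝟏}`) satisfies `Δ(ω) = α Δ(-ω)` with `α = ±1`; all its monomials have even
total degree if `α = 1` and odd total degree if `α = -1`. -/
theorem stmt17 {d n : ℕ} (A : Matrix (Fin d) (Fin n) ℤ)
    (hrank : (A.map fun z => (z : ℚ)).rank = d)
    (f : MvPolynomial (Fin d) ℂ) (hf0 : f ≠ 0) (hsf : Squarefree f)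
    (hdef : discLocus A (fun _ => -Complex.I) =
      {ω | MvPolynomial.eval ω f = 0}) :
    ∃ α : ℂ, (α = 1 ∨ α = -1) ∧
      (∀ ω : Fin d → ℂ, MvPolynomial.eval ω f = α * MvPolynomial.eval (-ω) f) ∧
      (α = 1 → ∀ m ∈ f.support, Even (∑ i, m i)) ∧
      (α = -1 → ∀ m ∈ f.support, Odd (∑ i, m i)) := by

  classical
  set β : Fin n → ℂ := fun _ => -Complex.I with hβdef
  set B : Set (Fin d → ℂ) :=
    {ω | ∃ v : Fin d → ℂ, (v, ω) ∈ Wset A β ∧ (toricJac A β v).det = 0} with hBdef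
  -- the Zariski closure of B is symmetric under negation
  have hclos : ∀ x : Fin d → ℂ, x ∈ ZClosure B → -x ∈ ZClosure B := by
    intro x hx
    rw [ZClosure, Set.mem_sInter] at hx ⊢
    rintro F ⟨hFc, hFB⟩
    have hx' : x ∈ (fun y : Fin d → ℂ => -y) ⁻¹' F := by
      refine hx _ ⟨ZClosed_neg_preimage hFc, ?_⟩
      intro ω hω
      exact hFB (branch_symm A hω)
    exact hx'
  -- symmetry of the zero set of f
  have hsymZ : ∀ ω : Fin d → ℂ, MvPolynomial.eval ω f = 0 → MvPolynomial.eval (-ω) f = 0 := by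
    intro ω hω
    have h1 : ω ∈ discLocus A β := by rw [hdef]; exact hω
    have h2 : -ω ∈ discLocus A β := hclos ω h1
    rw [hdef] at h2
    exact h2
  -- Nullstellensatz: f divides g := negMap f
  set g : MvPolynomial (Fin d) ℂ := negMap f with hgdef
  have hfg : f ∣ g := by
    have hmem : g ∈ MvPolynomial.vanishingIdeal ℂ
        (MvPolynomial.zeroLocus ℂ (Ideal.span {f})) := by
      rw [MvPolynomial.mem_vanishingIdeal_iff]
      intro x hx
      rw [MvPolynomial.mem_zeroLocus_iff] at hx
      show MvPolynomial.eval x g = 0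
      have hxf : MvPolynomial.eval x f = 0 :=
        hx f (Ideal.subset_span (Set.mem_singleton f))
      rw [hgdef, eval_negMap]
      exact hsymZ x hxf
    rw [MvPolynomial.vanishingIdeal_zeroLocus_eq_radical] at hmem
    obtain ⟨k, hk⟩ := Ideal.mem_radical_iff.mp hmem
    have hdvd : f ∣ g ^ k := Ideal.mem_span_singleton.mp hk
    have hdvd' : f ∣ g ^ (k + 1) := hdvd.trans (pow_dvd_pow g (Nat.le_succ k))
    exact (hsf.dvd_pow_iff_dvd (Nat.succ_ne_zero k)).mp hdvd'
  have hgf : g ∣ f := by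
    have := map_dvd negMap hfg
    rwa [← hgdef, negMap_negMap] at this
  obtain ⟨q, hq⟩ := hfg
  obtain ⟨q', hq'⟩ := hgf
  have hqq' : q * q' = 1 := by
    have h1 : f * 1 = f * (q * q') := by
      rw [mul_one]
      calc f = g * q' := hq'
      _ = f * q * q' := by rw [hq]
      _ = f * (q * q') := by ring
    exact (mul_left_cancel₀ hf0 h1).symm
  obtain ⟨c, rfl⟩ := mvpoly_isUnit_eq_C q (IsUnit.of_mul_eq_one q' hqq')
  -- c * c = 1
  have hnegC : negMap (MvPolynomial.C c : MvPolynomial (Fin d) ℂ) = MvPolynomial.C c := by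
    simp [negMap]
  have hcc : c * c = 1 := by
    have h1 : f = f * MvPolynomial.C (c * c) := by
      have h2 : f = negMap g := (negMap_negMap f).symm
      calc f = negMap g := h2
      _ = negMap (f * MvPolynomial.C c) := by rw [hq]
      _ = g * MvPolynomial.C c := by rw [map_mul, hnegC, hgdef]
      _ = f * MvPolynomial.C c * MvPolynomial.C c := by rw [hq]
      _ = f * MvPolynomial.C (c * c) := by rw [map_mul]; ring
    have h3 : f * MvPolynomial.C (c * c) = f * 1 := by rw [← h1, mul_one]
    have h4 : MvPolynomial.C (c * c) = (1 : MvPolynomial (Fin d) ℂ) :=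
      mul_left_cancel₀ hf0 h3
    rw [← MvPolynomial.C_1] at h4
    exact (MvPolynomial.C_inj ℂ _ _).mp h4
  have hα : c = 1 ∨ c = -1 := mul_self_eq_one_iff.mp hcc
  -- coefficient relation
  have hcoeff : ∀ m : Fin d →₀ ℕ, m ∈ f.support →
      ((-1 : ℂ)) ^ (∑ i, m i) = c := by
    intro m hm
    have h1 : MvPolynomial.coeff m g = (-1 : ℂ) ^ (∑ i, m i) * MvPolynomial.coeff m f := by
      rw [hgdef]; exact coeff_negMap f m
    have h2 : MvPolynomial.coeff m g = c * MvPolynomial.coeff m f := by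
      rw [hq, mul_comm f, ← MvPolynomial.smul_eq_C_mul, MvPolynomial.coeff_smul, smul_eq_mul]
    have h3 : MvPolynomial.coeff m f ≠ 0 := MvPolynomial.mem_support_iff.mp hm
    exact mul_right_cancel₀ h3 (h1.symm.trans h2)
  refine ⟨c, hα, ?_, ?_, ?_⟩
  · intro ω
    have h1 : MvPolynomial.eval (-ω) f = MvPolynomial.eval ω g := (eval_negMap f ω).symm
    rw [h1, hq]
    rw [map_mul, MvPolynomial.eval_C]
    calc MvPolynomial.eval ω f = (c * c) * MvPolynomial.eval ω f := by rw [hcc, one_mul]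
    _ = c * (MvPolynomial.eval ω f * c) := by ring
  · intro hc1 m hm
    rcases Nat.even_or_odd (∑ i, m i) with he | ho
    · exact he
    · exfalso
      have := hcoeff m hm
      rw [ho.neg_one_pow, hc1] at this
      norm_num at this
  · intro hc1 m hm
    rcases Nat.even_or_odd (∑ i, m i) with he | ho
    · exfalso
      have := hcoeff m hm
      rw [he.neg_one_pow, hc1] at this
      norm_num at this
    · exact ho
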